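/- arXiv:2504.05721 — 3 statements merged into one kernel-verified Lean document; each statement's English description precedes it below -/
import Mathlib

section
/- Let Σ be a finite graph with a nontrivial TF-morphism (α, β). Then for any finite graph Γ, the lexicographic product Γ[Σ] has a nontrivial TF-morphism, namely ((1,α),(1,β)). -/
def IsTF {V : Type*} (G : SimpleGraph V) (α β : Equiv.Perm V) : Prop :=
  ∀ u v : V, G.Adj u v → G.Adj (α u) (β v)

def IsTFS {V : Type*} (G : SimpleGraph V) (α β : Equiv.Perm V) : Prop :=
  (∀ u : V, G.Adj (α u) (β u)) ∧
    ∀ u v : V, G.Adj u v → G.Adj (α u) (β v) ∨ α u = β v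
def strongProd {V W : Type*} (G : SimpleGraph V) (H : SimpleGraph W) :
    SimpleGraph (V × W) where
  Adj p q := (p.1 = q.1 ∧ H.Adj p.2 q.2) ∨ (G.Adj p.1 q.1 ∧ H.Adj p.2 q.2) ∨
    (G.Adj p.1 q.1 ∧ p.2 = q.2)
  symm := by
    constructor
    rintro p q (⟨h1, h2⟩ | ⟨h1, h2⟩ | ⟨h1, h2⟩)
    · exact Or.inl ⟨h1.symm, h2.symm⟩
    · exact Or.inr (Or.inl ⟨h1.symm, h2.symm⟩)
    · exact Or.inr (Or.inr ⟨h1.symm, h2.symm⟩)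
  loopless := by
    constructor
    rintro p (⟨_, h2⟩ | ⟨h1, _⟩ | ⟨h1, _⟩)
    · exact H.loopless.irrefl _ h2
    · exact G.loopless.irrefl _ h1
    · exact G.loopless.irrefl _ h1

def semiStrongProd {V W : Type*} (G : SimpleGraph V) (H : SimpleGraph W) :
    SimpleGraph (V × W) where
  Adj p q := (G.Adj p.1 q.1 ∨ p.1 = q.1) ∧ H.Adj p.2 q.2
  symm := by
    constructor
    rintro p q ⟨h1 | h1, h2⟩
    · exact ⟨Or.inl h1.symm, h2.symm⟩
    · exact ⟨Or.inr h1.symm, h2.symm⟩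
  loopless := by
    constructor
    rintro p ⟨_, h2⟩
    exact H.loopless.irrefl _ h2

def lexProd {V W : Type*} (G : SimpleGraph V) (H : SimpleGraph W) :
    SimpleGraph (V × W) where
  Adj p q := G.Adj p.1 q.1 ∨ (p.1 = q.1 ∧ H.Adj p.2 q.2)
  symm := by
    constructor
    rintro p q (h | ⟨h1, h2⟩)
    · exact Or.inl h.symm
    · exact Or.inr ⟨h1.symm, h2.symm⟩
  loopless := by
    constructor
    rintro p (h | ⟨_, h2⟩)
    · exact G.loopless.irrefl _ h
    · exact H.loopless.irrefl _ h2

def directProd {V W : Type*} (G : SimpleGraph V) (H : SimpleGraph W) :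
    SimpleGraph (V × W) where
  Adj p q := G.Adj p.1 q.1 ∧ H.Adj p.2 q.2
  symm := by
    constructor
    rintro p q ⟨h1, h2⟩
    exact ⟨h1.symm, h2.symm⟩
  loopless := by
    constructor
    rintro p ⟨h1, _⟩
    exact G.loopless.irrefl _ h1

theorem stmt9 {V W : Type*} [Fintype V] [Fintype W] [Nonempty V]
    (G : SimpleGraph V) (H : SimpleGraph W)
    (α β : Equiv.Perm W) (hTF : IsTF H α β) (hne : α ≠ β) :
    IsTF (lexProd G H) ((Equiv.refl V).prodCongr α) ((Equiv.refl V).prodCongr β) ∧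
      (Equiv.refl V).prodCongr α ≠ (Equiv.refl V).prodCongr β := by
  constructor
  · rintro ⟨u1, u2⟩ ⟨v1, v2⟩ (h | ⟨h1, h2⟩)
    · exact Or.inl h
    · exact Or.inr ⟨h1, hTF _ _ h2⟩
  · intro h
    apply hne
    ext w
    have := congrArg (fun e => (e (Classical.arbitrary V, w)).2) h
    simpa using this
end

section
/- Let Γ be a finite graph with a TFS-morphism (α, β), and let Σ be any finite graph. Then ((α,1),(β,1)) is a TFS-morphism of the strong product Γ ⊠ Σ. -/
theorem stmt12 {V W : Type*} [Fintype V] [Fintype W]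
    (G : SimpleGraph V) (H : SimpleGraph W)
    (α β : Equiv.Perm V) (h : IsTFS G α β) :
    IsTFS (strongProd G H) (α.prodCongr (Equiv.refl W)) (β.prodCongr (Equiv.refl W)) := by
  constructor
  · intro u
    exact Or.inr (Or.inr ⟨h.1 u.1, rfl⟩)
  · rintro ⟨u1, u2⟩ ⟨v1, v2⟩ (⟨h1, h2⟩ | ⟨h1, h2⟩ | ⟨h1, h2⟩)
    · subst h1
      rcases eq_or_ne (α u1) (β u1) with he | hne
      · exact Or.inl (Or.inl ⟨he, h2⟩)
      · exact Or.inl (Or.inr (Or.inl ⟨(h.1 u1), h2⟩))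
    · rcases h.2 u1 v1 h1 with ha | he
      · exact Or.inl (Or.inr (Or.inl ⟨ha, h2⟩))
      · exact Or.inl (Or.inl ⟨he, h2⟩)
    · subst h2
      rcases h.2 u1 v1 h1 with ha | he
      · exact Or.inl (Or.inr (Or.inr ⟨ha, rfl⟩))
      · exact Or.inr (Prod.ext he rfl)
end

section
/- Let Γ be a finite graph with a TFS-morphism (α, β), and let Σ be any finite graph. Then ((α,1),(β,1)) is a nontrivial TF-morphism of the semi-strong product Γ ⋉ Σ, provided Σ has at least one edge. -/
theorem stmt13 {V W : Type*} [Fintype V] [Fintype W] [Nonempty V]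
    (G : SimpleGraph V) (H : SimpleGraph W)
    (α β : Equiv.Perm V) (h : IsTFS G α β)
    (hedge : ∃ x y : W, H.Adj x y) :
    IsTF (semiStrongProd G H) (α.prodCongr (Equiv.refl W)) (β.prodCongr (Equiv.refl W)) ∧
      α.prodCongr (Equiv.refl W) ≠ β.prodCongr (Equiv.refl W) := by
  constructor
  · rintro ⟨a, x⟩ ⟨b, y⟩ ⟨hab | hab, hxy⟩
    · rcases h.2 a b hab with h' | h'
      · exact ⟨Or.inl h', hxy⟩
      · exact ⟨Or.inr h', hxy⟩
    · subst hab
      exact ⟨Or.inl (h.1 a), hxy⟩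
  · intro heq
    obtain ⟨a⟩ := ‹Nonempty V›
    have h1 := h.1 a
    obtain ⟨x, y, -⟩ := hedge
    have h2 : (α.prodCongr (Equiv.refl W)) (a, x) = (β.prodCongr (Equiv.refl W)) (a, x) := by
      rw [heq]
    have : α a = β a := congrArg Prod.fst h2
    exact G.loopless.irrefl _ (this ▸ h1)
end
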